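/- arXiv:2306.06383 — 2 statements merged into one kernel-verified Lean document; each statement's English description precedes it below -/
import Mathlib

section
/- Let n ≥ 2, s ≥ 1, let D be a positive basis of ℝ^n with n+s elements, and let D ∈ ℝ^{n×(n+s)} be a matrix representation of D. If there exists a permutation matrix P ∈ ℝ^{(n+s)×(n+s)} such that the Gram matrix G(DP) = (DP)ᵀ(DP) is block diagonal with s diagonal blocks, then D is an orthogonally structured positive basis, and a decomposition of D into s minimal positive bases of pairwise orthogonal subspaces summing to ℝ^n is given by the groups of columns of DP corresponding to the s diagonal blocks. -/
open scoped RealInnerProductSpace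

noncomputable section

/-- Shorthand for the Euclidean space `ℝ^n`. -/
abbrev Euc (n : ℕ) := EuclideanSpace ℝ (Fin n)

/-- The positive span of a finite family of vectors: the set of all
linear combinations with nonnegative coefficients. -/
def pspan {n : ℕ} {ι : Type*} [Fintype ι] (D : ι → Euc n) : Set (Euc n) :=
  { x | ∃ c : ι → ℝ, (∀ i, 0 ≤ c i) ∧ x = ∑ i, c i • D i }

/-- `D` is a positive spanning set (PSS) of the subspace `L`. -/
def IsPSS {n : ℕ} {ι : Type*} [Fintype ι] (D : ι → Euc n)
    (L : Submodule ℝ (Euc n)) : Prop :=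
  pspan D = (L : Set (Euc n))

/-- `D` is a positive basis of `L`: a PSS of `L` such that removing any single
element (one instance of it) destroys the positive spanning property. -/
def IsPosBasis {n : ℕ} {ι : Type*} [Fintype ι] [DecidableEq ι] (D : ι → Euc n)
    (L : Submodule ℝ (Euc n)) : Prop :=
  IsPSS D L ∧ ∀ i : ι, ¬ IsPSS (fun j : {j : ι // j ≠ i} => D j) L

/-- `D` is a minimal positive basis of `L`: a positive basis with `dim L + 1` elements. -/
def IsMinPosBasis {n : ℕ} {ι : Type*} [Fintype ι] [DecidableEq ι] (D : ι → Euc n)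
    (L : Submodule ℝ (Euc n)) : Prop :=
  IsPosBasis D L ∧ Fintype.card ι = Module.finrank ℝ L + 1

/-- The positive `k`-span of a finite family `D`: the intersection of the positive
spans of all of its subfamilies of cardinality at least `|D| - k + 1`. -/
def pspanK {n : ℕ} {ι : Type*} [Fintype ι] (k : ℕ) (D : ι → Euc n) : Set (Euc n) :=
  ⋂ (S : Finset ι) (_ : Fintype.card ι - k + 1 ≤ S.card),
    pspan (fun j : {j : ι // j ∈ S} => D (j : ι))

/-- `D` is a positive `k`-spanning set (PkSS) of `L`. -/
def IsPkSS {n : ℕ} {ι : Type*} [Fintype ι] (k : ℕ) (D : ι → Euc n)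
    (L : Submodule ℝ (Euc n)) : Prop :=
  pspanK k D = (L : Set (Euc n))

/-- The `k`-span of a finite family `D`: the intersection of the linear spans of
all of its subfamilies of cardinality at least `|D| - k + 1`. -/
def spanK {n : ℕ} {ι : Type*} [Fintype ι] (k : ℕ) (D : ι → Euc n) : Set (Euc n) :=
  ⋂ (S : Finset ι) (_ : Fintype.card ι - k + 1 ≤ S.card),
    (Submodule.span ℝ (D '' (S : Set ι)) : Set (Euc n))

/-- `D` is a positive `k`-basis of `L`: a PkSS of `L` such that removing any single
element destroys the positive `k`-spanning property. -/
def IsPkBasis {n : ℕ} {ι : Type*} [Fintype ι] [DecidableEq ι] (k : ℕ) (D : ι → Euc n)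
    (L : Submodule ℝ (Euc n)) : Prop :=
  IsPkSS k D L ∧ ∀ i : ι, ¬ IsPkSS k (fun j : {j : ι // j ≠ i} => D j) L

/-- The cosine measure of a finite family of nonzero vectors. -/
def cosm {n : ℕ} {ι : Type*} [Fintype ι] (D : ι → Euc n) : ℝ :=
  ⨅ u : {u : Euc n // ‖u‖ = 1}, ⨆ i : ι, ⟪(u : Euc n), D i⟫ / ‖D i‖

/-- The `k`-cosine measure of a finite family of nonzero vectors. -/
def cosmK {n : ℕ} {ι : Type*} [Fintype ι] (k : ℕ) (D : ι → Euc n) : ℝ :=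
  ⨅ u : {u : Euc n // ‖u‖ = 1},
    ⨆ S : {S : Finset ι // S.card = k},
      ⨅ j : {j : ι // j ∈ (S : Finset ι)}, ⟪(u : Euc n), D (j : ι)⟫ / ‖D (j : ι)‖

/-- The cosine vector set: the unit vectors attaining the cosine measure. -/
def cosVSet {n : ℕ} {ι : Type*} [Fintype ι] (D : ι → Euc n) : Set (Euc n) :=
  { u | ‖u‖ = 1 ∧ (⨆ i : ι, ⟪u, D i⟫ / ‖D i‖) = cosm D }

/-- `D` is orthogonally structured with decomposition given by the pairwise orthogonal
subspaces `L i` (whose sum is `ℝ^n`) and the grouping map `g`: the subfamily of `D`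
corresponding to each fiber of `g` is a minimal positive basis of the associated subspace. -/
def IsOSPBDecomp {n s : ℕ} {ι : Type*} [Fintype ι] [DecidableEq ι] (D : ι → Euc n)
    (L : Fin s → Submodule ℝ (Euc n)) (g : ι → Fin s) : Prop :=
  (∀ i i' : Fin s, i ≠ i' → ∀ x ∈ L i, ∀ y ∈ L i', ⟪x, y⟫ = 0) ∧
  (⨆ i, L i) = (⊤ : Submodule ℝ (Euc n)) ∧
  ∀ i : Fin s, IsMinPosBasis (fun j : {j : ι // g j = i} => D (j : ι)) (L i)

/-- The Gram matrix `G(B) = BᵀB` of the subfamily of `D` indexed by `S`. -/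
def gramSub {n : ℕ} {ι : Type*} [Fintype ι] (D : ι → Euc n) (S : Finset ι) :
    Matrix {j : ι // j ∈ S} {j : ι // j ∈ S} ℝ :=
  Matrix.of fun j j' => ⟪D (j : ι), D (j' : ι)⟫

/-- The quantity `γ_B = 1/√(1ᵀ G(B)⁻¹ 1)` associated with the subfamily of `D`
indexed by `S`. -/
def gammaSub {n : ℕ} {ι : Type*} [Fintype ι] [DecidableEq ι] (D : ι → Euc n)
    (S : Finset ι) : ℝ :=
  1 / Real.sqrt (∑ j : {j : ι // j ∈ S}, ∑ j' : {j : ι // j ∈ S}, (gramSub D S)⁻¹ j j')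

/-- The subfamily of `D` indexed by `S` is a linear basis of `L`. -/
def IsBasisSub {n : ℕ} {ι : Type*} [Fintype ι] (D : ι → Euc n) (S : Finset ι)
    (L : Submodule ℝ (Euc n)) : Prop :=
  LinearIndependent ℝ (fun j : {j : ι // j ∈ S} => D (j : ι)) ∧
  Submodule.span ℝ (D '' (S : Set ι)) = L

/-- `R` is a rotation matrix: `RᵀR = I` and `det R = 1`. -/
def IsRotation {n : ℕ} (R : Matrix (Fin n) (Fin n) ℝ) : Prop :=
  R.transpose * R = 1 ∧ R.det = 1

/-- Action of an `n × n` matrix on the Euclidean space `ℝ^n`. -/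
def rotAct {n : ℕ} (R : Matrix (Fin n) (Fin n) ℝ) (x : Euc n) : Euc n :=
  Matrix.toEuclideanLin R x

/-- The quantity `ρ_D` of Lemma 4.13, where `P i i'` denotes the orthogonal projection
of `d_i` onto `L ∩ {v_{i'}}^⊥`. -/
def rhoQ {n : ℕ} {ι : Type*} [Fintype ι] (D : ι → Euc n) (P : ι → ι → Euc n) : ℝ :=
  ⨆ p : ι × ι, ⟪D p.1, P p.1 p.2⟫ / (‖D p.1‖ * ‖P p.1 p.2‖)


section OSPBHelpers

/-- Every member of a family belongs to its positive span. -/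
lemma mem_pspan_self' {n : ℕ} {ι : Type*} [Fintype ι] [DecidableEq ι] (D : ι → Euc n) (j : ι) :
    D j ∈ pspan D := by
  refine ⟨fun k => if k = j then 1 else 0, fun k => by positivity, ?_⟩
  simp [ite_smul]

lemma pspan_subset_span' {n : ℕ} {ι : Type*} [Fintype ι] (D : ι → Euc n) :
    pspan D ⊆ (Submodule.span ℝ (Set.range D) : Set (Euc n)) := by
  rintro x ⟨c, hc, rfl⟩
  exact Submodule.sum_mem _ fun j _ =>
    Submodule.smul_mem _ _ (Submodule.subset_span ⟨j, rfl⟩)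

lemma span_range_eq_of_isPSS' {n : ℕ} {ι : Type*} [Fintype ι] {D : ι → Euc n}
    {L : Submodule ℝ (Euc n)} (h : IsPSS D L) :
    Submodule.span ℝ (Set.range D) = L := by
  classical
  apply le_antisymm
  · rw [Submodule.span_le]
    rintro x ⟨j, rfl⟩
    have := mem_pspan_self' D j
    rw [h] at this
    exact this
  · intro x hx
    have : x ∈ pspan D := by rw [h]; exact hx
    exact pspan_subset_span' D this

/-- A positive spanning set of a nonzero subspace has at least `dim + 1` elements. -/
lemma card_of_isPSS' {n : ℕ} {ι : Type*} [Fintype ι] {D : ι → Euc n}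
    {L : Submodule ℝ (Euc n)} (h : IsPSS D L) (hL : L ≠ ⊥) :
    Module.finrank ℝ L + 1 ≤ Fintype.card ι := by
  classical
  have hsp := span_range_eq_of_isPSS' h
  have hle : Module.finrank ℝ L ≤ Fintype.card ι := by
    rw [← hsp]; exact finrank_range_le_card D
  by_contra hcon
  have hcard : Fintype.card ι = Module.finrank ℝ L := by omega
  have hlin : LinearIndependent ℝ D := by
    rw [linearIndependent_iff_card_eq_finrank_span]
    rw [Set.finrank, hsp]; exact hcard
  have hne : Nonempty ι := by
    by_contra hni
    rw [not_nonempty_iff] at hni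
    have : Set.range D = ∅ := Set.range_eq_empty D
    rw [this, Submodule.span_empty] at hsp
    exact hL hsp.symm
  obtain ⟨j0⟩ := hne
  have hmem : -D j0 ∈ pspan D := by
    rw [h]
    have : D j0 ∈ L := by
      rw [← hsp]; exact Submodule.subset_span ⟨j0, rfl⟩
    exact Submodule.neg_mem _ this
  obtain ⟨c, hc, hsum⟩ := hmem
  have h00 : ∑ j, (c j + if j = j0 then 1 else 0) • D j = 0 := by
    simp only [add_smul, Finset.sum_add_distrib, ← hsum, ite_smul, one_smul, zero_smul]
    simp
  have := Fintype.linearIndependent_iff.mp hlin _ h00 j0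
  simp at this
  linarith [hc j0]

lemma finrank_iSup_le_sum_finrank' {n s : ℕ} (L : Fin s → Submodule ℝ (Euc n)) :
    Module.finrank ℝ ↥(⨆ i, L i) ≤ ∑ i, Module.finrank ℝ ↥(L i) := by
  classical
  have h : ∀ t : Finset (Fin s),
      Module.finrank ℝ ↥(t.sup L) ≤ ∑ i ∈ t, Module.finrank ℝ ↥(L i) := by
    intro t
    induction t using Finset.induction_on with
    | empty => simp
    | @insert a t ha ih =>
      rw [Finset.sup_insert, Finset.sum_insert ha]
      have h2 := Submodule.finrank_sup_add_finrank_inf_eq (L a) (t.sup L)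
      omega
  rw [← Finset.sup_univ_eq_iSup L]
  exact h Finset.univ

end OSPBHelpers

/-- Corollary 3.3: if, after permuting the elements of a positive
basis `D` of `ℝ^n` by `σ`, the Gram matrix of the permuted family is block diagonal
with `s` diagonal blocks (blocks = fibers of a monotone surjection `b` onto `Fin s`),
then `D` is an OSPB whose decomposition is given by the groups of columns
corresponding to the blocks. -/
theorem gram_block_diagonal_gives_ospb_decomp {n s : ℕ} (hn : 2 ≤ n) (hs : 1 ≤ s)
    (D : Fin (n + s) → Euc n) (h0 : ∀ i, D i ≠ 0)
    (hD : IsPosBasis D (⊤ : Submodule ℝ (Euc n)))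
    (σ : Equiv.Perm (Fin (n + s))) (b : Fin (n + s) → Fin s)
    (hmono : Monotone b) (hsurj : Function.Surjective b)
    (hblock : ∀ j j' : Fin (n + s), b j ≠ b j' → ⟪D (σ j), D (σ j')⟫ = 0) :
    IsOSPBDecomp (fun j => D (σ j))
      (fun i => Submodule.span ℝ ((fun j => D (σ j)) '' {j | b j = i})) b := by
  classical
  set E : Fin (n + s) → Euc n := fun j => D (σ j) with hE
  set Lsp : Fin s → Submodule ℝ (Euc n) :=
    fun i => Submodule.span ℝ (E '' {j | b j = i}) with hLsp
  have hEmem : ∀ j : Fin (n + s), E j ∈ Lsp (b j) := fun j =>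
    Submodule.subset_span ⟨j, rfl, rfl⟩
  have horth : ∀ i i' : Fin s, i ≠ i' → ∀ x ∈ Lsp i, ∀ y ∈ Lsp i', ⟪x, y⟫ = 0 := by
    intro i i' hii
    have hOO : Lsp i ⟂ Lsp i' := by
      simp only [hLsp]
      refine Submodule.isOrtho_span.mpr ?_
      rintro u ⟨j, hj, rfl⟩ v ⟨j', hj', rfl⟩
      exact hblock j j' (by
        rw [Set.mem_setOf_eq] at hj hj'
        rw [hj, hj']; exact hii)
    exact fun x hx y hy => Submodule.isOrtho_iff_inner_eq.mp hOO x hx y hy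
  have hx_decomp : ∀ x : Euc n,
      ∃ c : Fin (n + s) → ℝ, (∀ j, 0 ≤ c j) ∧ x = ∑ j, c j • E j := by
    intro x
    have hx : x ∈ pspan D := by rw [hD.1]; trivial
    obtain ⟨c, hc, hxe⟩ := hx
    exact ⟨fun j => c (σ j), fun j => hc _, by
      rw [hxe]; exact (Equiv.sum_comp σ (fun k => c k • D k)).symm⟩
  have hfiber : ∀ i : Fin s,
      IsPSS (fun j : {j : Fin (n + s) // b j = i} => E (j : Fin (n + s))) (Lsp i) := by
    intro i
    apply Set.Subset.antisymm
    · rintro x ⟨c, hc, rfl⟩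
      refine Submodule.sum_mem _ fun j _ => Submodule.smul_mem _ _ ?_
      have := hEmem (j : Fin (n + s)); rwa [j.2] at this
    · intro x hx
      obtain ⟨c, hc, hxe⟩ := hx_decomp x
      set y := ∑ j ∈ Finset.univ.filter (fun j => b j = i), c j • E j with hy
      have hymem : y ∈ Lsp i := by
        refine Submodule.sum_mem _ fun j hj => Submodule.smul_mem _ _ ?_
        have := hEmem j; rwa [(Finset.mem_filter.mp hj).2] at this
      have hzeq : x - y = ∑ j ∈ Finset.univ.filter (fun j => ¬ b j = i), c j • E j := by
        rw [hxe, ← Finset.sum_filter_add_sum_filter_not Finset.univ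
          (fun j => b j = i) (fun j => c j • E j), hy]
        abel
      have hz0 : x = y := by
        have hinner : ⟪x - y, x - y⟫ = 0 := by
          nth_rewrite 1 [hzeq]
          rw [sum_inner]
          apply Finset.sum_eq_zero
          intro j hj
          have hbj : ¬ b j = i := (Finset.mem_filter.mp hj).2
          rw [real_inner_smul_left,
            horth (b j) i hbj (E j) (hEmem j) (x - y) (Submodule.sub_mem _ hx hymem),
            mul_zero]
        have := inner_self_eq_zero.mp hinner
        exact (sub_eq_zero.mp this)
      refine ⟨fun j => c (j : Fin (n + s)), fun j => hc _, ?_⟩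
      rw [hz0, hy]
      exact Finset.sum_subtype _ (by simp) (fun j => c j • E j)
  have hsup : (⨆ i, Lsp i) = ⊤ := by
    rw [eq_top_iff]
    intro x _
    obtain ⟨c, hc, hxe⟩ := hx_decomp x
    rw [hxe]
    exact Submodule.sum_mem _ fun j _ =>
      Submodule.smul_mem _ _ (Submodule.mem_iSup_of_mem (b j) (hEmem j))
  have hLne : ∀ i, Lsp i ≠ ⊥ := by
    intro i
    obtain ⟨j, hj⟩ := hsurj i
    rw [Submodule.ne_bot_iff]
    exact ⟨E j, by rw [← hj]; exact hEmem j, h0 (σ j)⟩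
  have hcard_ge : ∀ i, Module.finrank ℝ (Lsp i) + 1 ≤
      Fintype.card {j : Fin (n + s) // b j = i} :=
    fun i => card_of_isPSS' (hfiber i) (hLne i)
  have hsum_card : ∑ i, Fintype.card {j : Fin (n + s) // b j = i} = n + s := by
    simp_rw [Fintype.card_subtype]
    rw [← Finset.card_eq_sum_card_fiberwise (fun j _ => Finset.mem_univ (b j))]
    simp
  have hsum_rank : n ≤ ∑ i, Module.finrank ℝ (Lsp i) := by
    have h1 := finrank_iSup_le_sum_finrank' Lsp
    rw [hsup] at h1
    rwa [finrank_top, finrank_euclideanSpace_fin] at h1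
  have key : ∀ i, Fintype.card {j : Fin (n + s) // b j = i} =
      Module.finrank ℝ (Lsp i) + 1 := by
    by_contra hcon
    push_neg at hcon
    obtain ⟨i0, hi0⟩ := hcon
    have hlt : ∑ i, (Module.finrank ℝ (Lsp i) + 1) <
        ∑ i, Fintype.card {j : Fin (n + s) // b j = i} :=
      Finset.sum_lt_sum (fun i _ => hcard_ge i)
        ⟨i0, Finset.mem_univ _, lt_of_le_of_ne (hcard_ge i0) (Ne.symm hi0)⟩
    rw [hsum_card] at hlt
    have heq : ∑ i, (Module.finrank ℝ (Lsp i) + 1) =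
        (∑ i, Module.finrank ℝ (Lsp i)) + s := by
      rw [Finset.sum_add_distrib]; simp
    omega
  refine ⟨horth, hsup, ?_⟩
  intro i
  refine ⟨⟨hfiber i, ?_⟩, key i⟩
  intro j0 hmin
  refine hD.2 (σ (j0 : Fin (n + s))) ?_
  show pspan _ = _
  rw [Submodule.top_coe]
  apply Set.eq_univ_of_forall
  intro x
  obtain ⟨c, hc, hxe⟩ := hx_decomp x
  set j0' : Fin (n + s) := (j0 : Fin (n + s)) with hj0'
  have hbj0 : b j0' = i := j0.2
  set y := ∑ j ∈ Finset.univ.filter (fun j => b j = i), c j • E j with hy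
  have hymem : y ∈ Lsp i := by
    refine Submodule.sum_mem _ fun j hj => Submodule.smul_mem _ _ ?_
    have := hEmem j; rwa [(Finset.mem_filter.mp hj).2] at this
  have hy2 : y ∈ pspan (fun j : {j : {j : Fin (n + s) // b j = i} // j ≠ j0} =>
      E ((j : {j : Fin (n + s) // b j = i}) : Fin (n + s))) := by
    rw [hmin]; exact hymem
  obtain ⟨d, hd, hyeq⟩ := hy2
  set dd : Fin (n + s) → ℝ := fun j =>
    if h : b j = i ∧ j ≠ j0' then
      d ⟨⟨j, h.1⟩, fun he => h.2 (by simpa using congrArg Subtype.val he)⟩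
    else 0 with hdd
  set cc : Fin (n + s) → ℝ := fun j => if b j = i then dd j else c j with hcc
  have hccnn : ∀ j, 0 ≤ cc j := by
    intro j
    by_cases h1 : b j = i
    · simp only [hcc, if_pos h1, hdd]
      split
      · apply hd
      · exact le_refl 0
    · simp only [hcc, if_neg h1]; exact hc j
  set T : Finset (Fin (n + s)) :=
    (Finset.univ.filter (fun j => b j = i)).erase j0' with hT
  have hmemT : ∀ j : Fin (n + s), j ∈ T ↔ b j = i ∧ j ≠ j0' := by
    intro j
    simp only [hT, Finset.mem_erase, Finset.mem_filter, Finset.mem_univ, true_and]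
    tauto
  have hddj0 : dd j0' = 0 := by simp [hdd]
  have claim1 : y = ∑ j ∈ Finset.univ.filter (fun j => b j = i), dd j • E j := by
    rw [hyeq]
    rw [← Finset.sum_erase (Finset.univ.filter (fun j => b j = i))
      (show dd j0' • E j0' = 0 by rw [hddj0, zero_smul])]
    rw [← Finset.sum_coe_sort
      ((Finset.univ.filter (fun j => b j = i)).erase j0') (fun j => dd j • E j)]
    refine Fintype.sum_equiv
      ⟨fun j => ⟨((j : {j : Fin (n + s) // b j = i}) : Fin (n + s)),
          (hmemT _).mpr ⟨(j : {j : Fin (n + s) // b j = i}).2,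
            fun he => j.2 (Subtype.ext he)⟩⟩,
       fun j => ⟨⟨(j : Fin (n + s)), ((hmemT _).mp j.2).1⟩,
          fun he => ((hmemT _).mp j.2).2 (congrArg Subtype.val he)⟩,
       fun j => by apply Subtype.ext; apply Subtype.ext; rfl,
       fun j => by apply Subtype.ext; rfl⟩ _ _ ?_
    intro j
    simp only [Equiv.coe_fn_mk]
    congr 1
    simp only [hdd]
    rw [dif_pos ⟨(j : {j : Fin (n + s) // b j = i}).2, fun he => j.2 (Subtype.ext he)⟩]
  have claimx : x = ∑ j ∈ Finset.univ.erase j0', cc j • E j := by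
    have hsplit : ∑ j ∈ Finset.univ.erase j0', cc j • E j =
        ∑ j ∈ (Finset.univ.erase j0').filter (fun j => b j = i), cc j • E j
        + ∑ j ∈ (Finset.univ.erase j0').filter (fun j => ¬ b j = i), cc j • E j :=
      (Finset.sum_filter_add_sum_filter_not _ _ _).symm
    have hf1 : (Finset.univ.erase j0').filter (fun j => b j = i) = T := by
      ext j
      simp only [hT, Finset.mem_erase, Finset.mem_filter, Finset.mem_univ, true_and]
      tauto
    have hf2 : (Finset.univ.erase j0').filter (fun j => ¬ b j = i) =
        Finset.univ.filter (fun j => ¬ b j = i) := by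
      ext j
      constructor
      · intro hj
        rw [Finset.mem_filter] at hj ⊢
        exact ⟨Finset.mem_univ _, hj.2⟩
      · intro hj
        rw [Finset.mem_filter] at hj ⊢
        refine ⟨Finset.mem_erase.mpr ⟨fun he => hj.2 ?_, Finset.mem_univ _⟩, hj.2⟩
        rw [he]; exact hbj0
    have e1 : ∑ j ∈ T, cc j • E j = y := by
      rw [Finset.sum_congr rfl (fun j hj => by
        rw [show cc j = dd j from if_pos ((hmemT j).mp hj).1])]
      rw [claim1, hT]
      exact Finset.sum_erase _ (by rw [hddj0, zero_smul])
    have e2 : ∑ j ∈ Finset.univ.filter (fun j => ¬ b j = i), cc j • E j = x - y := by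
      rw [Finset.sum_congr rfl (fun j hj => by
        rw [show cc j = c j from if_neg (Finset.mem_filter.mp hj).2])]
      rw [hxe, hy, ← Finset.sum_filter_add_sum_filter_not Finset.univ
        (fun j => b j = i) (fun j => c j • E j)]
      abel
    rw [hsplit, hf1, hf2, e1, e2]
    abel
  refine ⟨fun k => cc (σ.symm (k : Fin (n + s))), fun k => hccnn _, ?_⟩
  rw [claimx]
  rw [← Fintype.sum_equiv
    (⟨fun (j : {j : Fin (n + s) // j ≠ j0'}) =>
        (⟨σ j, fun he => j.2 (σ.injective he)⟩ : {k : Fin (n + s) // k ≠ σ j0'}),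
      fun k => ⟨σ.symm k, fun he => k.2 ((Equiv.symm_apply_eq σ).mp he)⟩,
      fun j => Subtype.ext (σ.symm_apply_apply j),
      fun k => Subtype.ext (σ.apply_symm_apply k)⟩)
    (fun j => cc (j : Fin (n + s)) • E (j : Fin (n + s)))
    (fun k => cc (σ.symm (k : Fin (n + s))) • D (k : Fin (n + s)))
    (fun j => by simp [hE])]
  exact Finset.sum_subtype _ (fun j => by simp [Finset.mem_erase]) _
end
end

section
/- Let D be a finite family of nonzero vectors in ℝ^n and let k be an integer with 1 ≤ k ≤ |D|. Then D is a positive k-spanning set of ℝ^n if and only if cm_k(D) > 0. -/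
open scoped RealInnerProductSpace

noncomputable section

section Aux

variable {n : ℕ} {κ : Type*} [Fintype κ]

lemma zero_mem_pspan (E : κ → Euc n) : (0 : Euc n) ∈ pspan E :=
  ⟨0, fun _ => le_rfl, by simp⟩

lemma mem_pspan_self (E : κ → Euc n) (i : κ) : E i ∈ pspan E := by
  classical
  refine ⟨fun j => if j = i then 1 else 0, fun j => by positivity, ?_⟩
  simp [ite_smul]

lemma pspan_smul_mem (E : κ → Euc n) {t : ℝ} (ht : 0 ≤ t) {x : Euc n}
    (hx : x ∈ pspan E) : t • x ∈ pspan E := by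
  obtain ⟨c, hc, rfl⟩ := hx
  exact ⟨fun i => t * c i, fun i => mul_nonneg ht (hc i),
    by simp [Finset.smul_sum, mul_smul]⟩

lemma convex_pspan (E : κ → Euc n) : Convex ℝ (pspan E) := by
  rintro x ⟨c, hc, rfl⟩ y ⟨d, hd, rfl⟩ a b ha hb _
  refine ⟨fun i => a * c i + b * d i,
    fun i => add_nonneg (mul_nonneg ha (hc i)) (mul_nonneg hb (hd i)), ?_⟩
  simp [add_smul, mul_smul, Finset.smul_sum, Finset.sum_add_distrib]

lemma pspan_eq_univ_iff (E : κ → Euc n) :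
    pspan E = Set.univ ↔ ∀ u : Euc n, u ≠ 0 → ∃ i, 0 < ⟪u, E i⟫ := by
  constructor
  · intro h u hu
    have hmem : u ∈ pspan E := h ▸ Set.mem_univ u
    obtain ⟨c, hc, hue⟩ := hmem
    have hpos : 0 < ⟪u, u⟫ := by
      rw [real_inner_self_eq_norm_sq]
      exact pow_pos (norm_pos_iff.2 hu) 2
    have hsum : ⟪u, u⟫ = ∑ i, c i * ⟪u, E i⟫ := by
      calc ⟪u, u⟫ = ⟪u, ∑ i, c i • E i⟫ := by rw [← hue]
        _ = ∑ i, ⟪u, c i • E i⟫ := by rw [inner_sum]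
        _ = ∑ i, c i * ⟪u, E i⟫ :=
          Finset.sum_congr rfl fun i _ => real_inner_smul_right _ _ _
    rw [hsum] at hpos
    by_contra hcon
    push_neg at hcon
    have : ∑ i, c i * ⟪u, E i⟫ ≤ 0 :=
      Finset.sum_nonpos fun i _ => mul_nonpos_of_nonneg_of_nonpos (hc i) (hcon i)
    linarith
  · intro H
    -- the convex hull of `0` and the `E i` is contained in the positive span
    set C : Set (Euc n) := convexHull ℝ (insert 0 (Set.range E)) with hC
    have hCsub : C ⊆ pspan E := by
      apply convexHull_min _ (convex_pspan E)
      rintro x (rfl | ⟨i, rfl⟩)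
      · exact zero_mem_pspan E
      · exact mem_pspan_self E i
    -- the linear span of the `E i` is everything
    have hspan : Submodule.span ℝ (Set.range E) = ⊤ := by
      by_contra hne
      have hbot : (Submodule.span ℝ (Set.range E))ᗮ ≠ ⊥ := by
        intro hb
        exact hne (Submodule.orthogonal_eq_bot_iff.1 hb)
      obtain ⟨u, hu_mem, hu0⟩ := Submodule.exists_mem_ne_zero_of_ne_bot hbot
      obtain ⟨i, hi⟩ := H u hu0
      have : ⟪u, E i⟫ = 0 := by
        have := (Submodule.mem_orthogonal' _ u).1 hu_mem (E i)
          (Submodule.subset_span (Set.mem_range_self i))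
        exact this
      linarith
    -- hence `C` has nonempty interior
    have haff : affineSpan ℝ (insert 0 (Set.range E)) = ⊤ := by
      have hset : (affineSpan ℝ (insert 0 (Set.range E)) : Set (Euc n)) =
          (Submodule.span ℝ (Set.range E) : Set (Euc n)) := affineSpan_insert_zero _
      have : (affineSpan ℝ (insert 0 (Set.range E)) : Set (Euc n)) = Set.univ := by
        rw [hset, hspan]; simp
      exact (AffineSubspace.ext_iff _ _).2 (by rw [this, AffineSubspace.top_coe])
    have hconv : Convex ℝ C := convex_convexHull _ _
    have hint : (interior C).Nonempty := by
      rw [hconv.interior_nonempty_iff_affineSpan_eq_top]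
      rw [hC, affineSpan_convexHull]
      exact haff
    -- `0` lies in the interior of `C`
    have h0C : (0 : Euc n) ∈ interior C := by
      by_contra h0
      obtain ⟨f, hf⟩ := geometric_hahn_banach_open_point
        (hconv.interior (E := Euc n)) isOpen_interior h0
      obtain ⟨y, hy⟩ := hint
      have hfy : f y < 0 := by simpa using hf y hy
      -- `f ≤ 0` on `C`
      have hfC : ∀ x ∈ C, f x ≤ 0 := by
        intro x hx
        by_contra hfx
        push_neg at hfx
        have hxy : f x - f y > 0 := by linarith
        set t : ℝ := f x / (2 * (f x - f y)) with ht
        have ht0 : 0 < t := by positivity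
        have ht1 : t ≤ 1 / 2 := by
          rw [ht, div_le_div_iff₀ (by linarith) (by norm_num)]
          nlinarith
        have hmem : (1 - t) • x + t • y ∈ interior C :=
          hconv.combo_closure_interior_mem_interior (subset_closure hx) hy
            (by linarith) ht0 (by ring)
        have := hf _ hmem
        have hval : f ((1 - t) • x + t • y) = (1 - t) * f x + t * f y := by
          simp [map_add, map_smul, smul_eq_mul]
        rw [hval] at this
        simp only [map_zero] at this
        have htfx : t * (f x - f y) = f x / 2 := by
          rw [ht]; field_simp
        nlinarith
      -- the representing vector of `f` contradicts `H`
      set u : Euc n := (InnerProductSpace.toDual ℝ (Euc n)).symm f with hu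
      have hu_inner : ∀ x : Euc n, ⟪u, x⟫ = f x := fun x =>
        InnerProductSpace.toDual_symm_apply
      have hune : u ≠ 0 := by
        intro h
        have : f y = 0 := by rw [← hu_inner y, h]; simp
        linarith
      obtain ⟨i, hi⟩ := H u hune
      have hEiC : E i ∈ C := subset_convexHull _ _ (Set.mem_insert_of_mem _ ⟨i, rfl⟩)
      have := hfC (E i) hEiC
      rw [← hu_inner (E i)] at this
      linarith
    -- conclude
    obtain ⟨ε, hε, hball⟩ := Metric.mem_nhds_iff.1 (mem_interior_iff_mem_nhds.1 h0C)
    apply Set.eq_univ_of_forall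
    intro x
    rcases eq_or_ne x 0 with rfl | hx
    · exact zero_mem_pspan E
    · have hnx : 0 < ‖x‖ := norm_pos_iff.2 hx
      set t : ℝ := ε / (2 * ‖x‖) with ht
      have ht0 : 0 < t := by positivity
      have htx : t • x ∈ Metric.ball (0 : Euc n) ε := by
        rw [Metric.mem_ball, dist_zero_right, norm_smul, Real.norm_eq_abs,
          abs_of_pos ht0, ht]
        have heq : ε / (2 * ‖x‖) * ‖x‖ = ε / 2 := by field_simp
        rw [heq]
        linarith
      have hmem : t • x ∈ pspan E := hCsub (hball htx)
      have : t⁻¹ • (t • x) ∈ pspan E := pspan_smul_mem E (le_of_lt (by positivity)) hmem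
      rwa [smul_smul, inv_mul_cancel₀ (ne_of_gt ht0), one_smul] at this

lemma ciInf_pos_iff_fin {α : Type*} [Finite α] [Nonempty α] (g : α → ℝ) :
    (0 < ⨅ a, g a) ↔ ∀ a, 0 < g a := by
  constructor
  · intro h a
    exact lt_of_lt_of_le h (ciInf_le (Set.finite_range g).bddBelow a)
  · intro h
    obtain ⟨a, ha⟩ := Finite.exists_min g
    have : (⨅ a, g a) = g a :=
      le_antisymm (ciInf_le (Set.finite_range g).bddBelow a) (le_ciInf ha)
    rw [this]; exact h a

lemma ciSup_pos_iff_fin {α : Type*} [Finite α] [Nonempty α] (g : α → ℝ) :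
    (0 < ⨆ a, g a) ↔ ∃ a, 0 < g a := by
  constructor
  · intro h
    obtain ⟨a, ha⟩ := Finite.exists_max g
    refine ⟨a, ?_⟩
    have : (⨆ a, g a) = g a :=
      le_antisymm (ciSup_le ha) (le_ciSup (Set.finite_range g).bddAbove a)
    rwa [this] at h
  · rintro ⟨a, ha⟩
    exact lt_of_lt_of_le ha (le_ciSup (Set.finite_range g).bddAbove a)

end Aux

/-- Theorem 4.8: a finite family `D` of nonzero vectors of `ℝ^n`
is a positive `k`-spanning set of `ℝ^n` iff its `k`-cosine measure is positive. -/
theorem pkss_iff_cosmK_pos {n : ℕ} {ι : Type*} [Fintype ι]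
    (D : ι → Euc n) (h0 : ∀ i, D i ≠ 0)
    (k : ℕ) (hk1 : 1 ≤ k) (hk2 : k ≤ Fintype.card ι) :
    IsPkSS k D (⊤ : Submodule ℝ (Euc n)) ↔ 0 < cosmK k D := by
  classical
  have hι : Nonempty ι := Fintype.card_pos_iff.1 (by omega)
  obtain ⟨i₀⟩ := hι
  haveI : Nontrivial (Euc n) := nontrivial_of_ne (D i₀) 0 (h0 i₀)
  -- Step 1 & 2: `IsPkSS` is equivalent to : every nonzero `u` makes a positive
  -- inner product with at least `k` of the `D i`.
  have key : IsPkSS k D (⊤ : Submodule ℝ (Euc n)) ↔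
      ∀ u : Euc n, u ≠ 0 → ∃ T : Finset ι, T.card = k ∧ ∀ i ∈ T, 0 < ⟪u, D i⟫ := by
    unfold IsPkSS pspanK
    rw [Submodule.top_coe]
    simp only [Set.iInter_eq_univ]
    constructor
    · intro h u hu
      set P : Finset ι := Finset.univ.filter (fun i => 0 < ⟪u, D i⟫) with hP
      have hcard : k ≤ P.card := by
        by_contra hlt
        push_neg at hlt
        have hc1 : Pᶜ.card = Fintype.card ι - P.card := Finset.card_compl P
        have hc2 : P.card ≤ Fintype.card ι := Finset.card_le_univ P
        have hPc : Fintype.card ι - k + 1 ≤ Pᶜ.card := by omega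
        obtain ⟨⟨j, hj⟩, hjpos⟩ := (pspan_eq_univ_iff _).1 (h Pᶜ hPc) u hu
        exact (Finset.mem_compl.1 hj) (Finset.mem_filter.2 ⟨Finset.mem_univ j, hjpos⟩)
      obtain ⟨T, hTP, hTc⟩ := Finset.exists_subset_card_eq hcard
      exact ⟨T, hTc, fun i hi => (Finset.mem_filter.1 (hTP hi)).2⟩
    · intro h S hS
      rw [pspan_eq_univ_iff]
      intro u hu
      obtain ⟨T, hTc, hTpos⟩ := h u hu
      have hmeet : ∃ j, j ∈ S ∧ j ∈ T := by
        by_contra hcon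
        push_neg at hcon
        have hdis : Disjoint S T := Finset.disjoint_left.2 hcon
        have hcu := Finset.card_union_of_disjoint hdis
        have hle := Finset.card_le_univ (S ∪ T)
        omega
      obtain ⟨j, hjS, hjT⟩ := hmeet
      exact ⟨⟨j, hjS⟩, hTpos j hjT⟩
  rw [key]
  -- Step 3: the cosine-measure side.
  haveI hTS : Nonempty {S : Finset ι // S.card = k} := by
    obtain ⟨T, _, hTc⟩ := Finset.exists_subset_card_eq
      (show k ≤ (Finset.univ : Finset ι).card by rwa [Finset.card_univ])
    exact ⟨⟨T, hTc⟩⟩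
  have hjS : ∀ S : {S : Finset ι // S.card = k}, Nonempty {j : ι // j ∈ (S : Finset ι)} := by
    intro S
    obtain ⟨j, hj⟩ := Finset.card_pos.1 (show 0 < (S : Finset ι).card by rw [S.2]; omega)
    exact ⟨⟨j, hj⟩⟩
  set f : Euc n → ℝ := fun u => ⨆ S : {S : Finset ι // S.card = k},
      ⨅ j : {j : ι // j ∈ (S : Finset ι)}, ⟪u, D (j : ι)⟫ / ‖D (j : ι)‖ with hf
  have hcosm : cosmK k D = ⨅ u : {u : Euc n // ‖u‖ = 1}, f (u : Euc n) := by
    rw [hf]; rfl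
  -- pointwise characterization of positivity of `f`
  have hpt : ∀ u : Euc n,
      (0 < f u ↔ ∃ T : Finset ι, T.card = k ∧ ∀ i ∈ T, 0 < ⟪u, D i⟫) := by
    intro u
    simp only [hf]
    rw [ciSup_pos_iff_fin]
    constructor
    · rintro ⟨S, hS⟩
      haveI := hjS S
      rw [ciInf_pos_iff_fin] at hS
      refine ⟨(S : Finset ι), S.2, fun i hi => ?_⟩
      have hpos := hS ⟨i, hi⟩
      have hD : 0 < ‖D i‖ := norm_pos_iff.2 (h0 i)
      rcases div_pos_iff.1 hpos with ⟨h1, _⟩ | ⟨_, h2⟩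
      · exact h1
      · linarith
    · rintro ⟨T, hTc, hTpos⟩
      refine ⟨⟨T, hTc⟩, ?_⟩
      haveI := hjS ⟨T, hTc⟩
      rw [ciInf_pos_iff_fin]
      intro j
      exact div_pos (hTpos j j.2) (norm_pos_iff.2 (h0 j))
  -- scale invariance
  have hscale : (∀ u : Euc n, u ≠ 0 → ∃ T : Finset ι, T.card = k ∧ ∀ i ∈ T, 0 < ⟪u, D i⟫)
      ↔ ∀ u : Euc n, ‖u‖ = 1 → 0 < f u := by
    constructor
    · intro h u hu
      rw [hpt u]
      exact h u (fun h0' => by rw [h0'] at hu; simp at hu)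
    · intro h u hu
      have hnu : 0 < ‖u‖ := norm_pos_iff.2 hu
      have h1 : ‖(‖u‖⁻¹ • u)‖ = 1 := norm_smul_inv_norm hu
      obtain ⟨T, hTc, hTpos⟩ := (hpt _).1 (h _ h1)
      refine ⟨T, hTc, fun i hi => ?_⟩
      have hTi := hTpos i hi
      rw [real_inner_smul_left] at hTi
      have hinv : 0 < ‖u‖⁻¹ := inv_pos.2 hnu
      nlinarith
  rw [hscale, hcosm]
  -- continuity of `f`
  have hcont : Continuous f := by
    have hrw : f = fun u => (Finset.univ : Finset {S : Finset ι // S.card = k}).sup'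
        (Finset.univ_nonempty_iff.2 hTS)
        (fun S => (Finset.univ : Finset {j : ι // j ∈ (S : Finset ι)}).inf'
          (Finset.univ_nonempty_iff.2 (hjS S))
          (fun j => ⟪u, D (j : ι)⟫ / ‖D (j : ι)‖)) := by
      funext u
      simp only [hf]
      rw [← Finset.sup'_univ_eq_ciSup]
      refine Finset.sup'_congr _ rfl (fun S _ => ?_)
      haveI := hjS S
      rw [← Finset.inf'_univ_eq_ciInf]
    rw [hrw]
    apply Continuous.finset_sup'_apply _ (fun S _ => ?_)
    apply Continuous.finset_inf'_apply _ (fun j _ => ?_)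
    exact (continuous_id.inner continuous_const).div_const _
  -- compactness of the sphere
  have hsphere_ne : (Metric.sphere (0 : Euc n) 1).Nonempty := by
    obtain ⟨u, hu⟩ := exists_norm_eq (Euc n) (zero_le_one)
    exact ⟨u, by simpa [mem_sphere_zero_iff_norm] using hu⟩
  obtain ⟨u₀, hu₀, hmin⟩ :=
    (isCompact_sphere (0 : Euc n) 1).exists_isMinOn hsphere_ne hcont.continuousOn
  have hu₀1 : ‖u₀‖ = 1 := by simpa [mem_sphere_zero_iff_norm] using hu₀
  haveI : Nonempty {u : Euc n // ‖u‖ = 1} := ⟨⟨u₀, hu₀1⟩⟩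
  have hbdd : BddBelow (Set.range fun u : {u : Euc n // ‖u‖ = 1} => f (u : Euc n)) := by
    refine ⟨-1, ?_⟩
    rintro x ⟨u, rfl⟩
    simp only [hf]
    obtain ⟨S⟩ := hTS
    have hle : -1 ≤ ⨅ j : {j : ι // j ∈ (S : Finset ι)},
        ⟪(u : Euc n), D (j : ι)⟫ / ‖D (j : ι)‖ := by
      haveI := hjS S
      apply le_ciInf
      intro j
      have hD : 0 < ‖D (j : ι)‖ := norm_pos_iff.2 (h0 _)
      rw [le_div_iff₀ hD]
      have h1 : |⟪(u : Euc n), D (j : ι)⟫| ≤ ‖(u : Euc n)‖ * ‖D (j : ι)‖ :=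
        abs_real_inner_le_norm _ _
      rw [u.2] at h1
      have h2 := neg_abs_le ⟪(u : Euc n), D (j : ι)⟫
      nlinarith
    exact le_trans hle (le_ciSup (f := fun S : {S : Finset ι // S.card = k} =>
      ⨅ j : {j : ι // j ∈ (S : Finset ι)}, ⟪(u : Euc n), D (j : ι)⟫ / ‖D (j : ι)‖)
      (Set.finite_range _).bddAbove S)
  constructor
  · intro h
    refine lt_of_lt_of_le (h u₀ hu₀1) (le_ciInf ?_)
    intro u
    exact (isMinOn_iff.1 hmin) (u : Euc n)
      (by rw [mem_sphere_zero_iff_norm]; exact u.2)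
  · intro h u hu1
    exact lt_of_lt_of_le h (ciInf_le hbdd ⟨u, hu1⟩)
end
end
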